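/- For 2x2 positive semidefinite matrices A and B, the Uhlmann fidelity satisfies Tr(sqrt(sqrt(A) B sqrt(A))) = sqrt(Tr(AB) + 2 sqrt(det(A) det(B))). -/

import Mathlib

open Matrix

/-- The positive semidefinite square root of a matrix (zero if not PSD). -/
noncomputable def psdSqrt {d : ℕ} (A : Matrix (Fin d) (Fin d) ℝ) : Matrix (Fin d) (Fin d) ℝ :=
  @dite _ A.PosSemidef (Classical.dec _) (fun h => h.1.eigenvectorUnitary.1 * diagonal ((↑) ∘ (√·) ∘ h.1.eigenvalues) *
    (star h.1.eigenvectorUnitary : Matrix (Fin d) (Fin d) ℝ)) (fun _ => 0)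

noncomputable def Matrix.PosSemidef.sqrt {d : ℕ} {A : Matrix (Fin d) (Fin d) ℝ} (h : A.PosSemidef) :
    Matrix (Fin d) (Fin d) ℝ :=
  h.1.eigenvectorUnitary.1 * diagonal ((↑) ∘ (√·) ∘ h.1.eigenvalues) *
    (star h.1.eigenvectorUnitary : Matrix (Fin d) (Fin d) ℝ)

lemma Matrix.PosSemidef.posSemidef_sqrt {d : ℕ} {A : Matrix (Fin d) (Fin d) ℝ} (h : A.PosSemidef) :
    h.sqrt.PosSemidef := by
  unfold Matrix.PosSemidef.sqrt
  have hD : (diagonal ((↑) ∘ (√·) ∘ h.1.eigenvalues) : Matrix (Fin d) (Fin d) ℝ).PosSemidef := by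
    rw [posSemidef_diagonal_iff]
    intro i
    simp [Real.sqrt_nonneg]
  have := hD.mul_mul_conjTranspose_same (h.1.eigenvectorUnitary.1)
  simpa [Matrix.star_eq_conjTranspose] using this

lemma Matrix.PosSemidef.sqrt_mul_self {d : ℕ} {A : Matrix (Fin d) (Fin d) ℝ} (h : A.PosSemidef) :
    h.sqrt * h.sqrt = A := by
  unfold Matrix.PosSemidef.sqrt
  conv_rhs => rw [h.1.spectral_theorem, Unitary.conjStarAlgAut_apply]
  have hU : (star h.1.eigenvectorUnitary : Matrix (Fin d) (Fin d) ℝ) * h.1.eigenvectorUnitary.1 = 1 :=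
    Unitary.coe_star_mul_self _
  calc _ = h.1.eigenvectorUnitary.1 * (diagonal ((↑) ∘ (√·) ∘ h.1.eigenvalues) *
        ((star h.1.eigenvectorUnitary : Matrix (Fin d) (Fin d) ℝ) * h.1.eigenvectorUnitary.1) *
        diagonal ((↑) ∘ (√·) ∘ h.1.eigenvalues)) *
        (star h.1.eigenvectorUnitary : Matrix (Fin d) (Fin d) ℝ) := by
          simp only [Matrix.mul_assoc]
    _ = _ := by
      rw [hU, Matrix.mul_one, diagonal_mul_diagonal]
      congr 3
      funext i
      simp [Real.mul_self_sqrt (h.eigenvalues_nonneg i)]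

lemma psdSqrt_eq {d : ℕ} {A : Matrix (Fin d) (Fin d) ℝ} (h : A.PosSemidef) :
    psdSqrt A = h.sqrt := by
  unfold psdSqrt; exact dif_pos h

lemma psd_det_nonneg {d : ℕ} {M : Matrix (Fin d) (Fin d) ℝ} (hM : M.PosSemidef) :
    0 ≤ M.det := by
  rw [hM.isHermitian.det_eq_prod_eigenvalues]
  exact Finset.prod_nonneg fun i _ => hM.eigenvalues_nonneg i

lemma psd_trace_nonneg {d : ℕ} {M : Matrix (Fin d) (Fin d) ℝ} (hM : M.PosSemidef) :
    0 ≤ M.trace := by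
  rw [Matrix.trace]
  refine Finset.sum_nonneg fun i _ => ?_
  simpa [Matrix.diag] using hM.diag_nonneg (i := i)

lemma trace_sq_fin_two (S : Matrix (Fin 2) (Fin 2) ℝ) :
    S.trace ^ 2 = (S * S).trace + 2 * S.det := by
  simp [Matrix.trace_fin_two, Matrix.det_fin_two, Matrix.mul_apply, Fin.sum_univ_two]
  ring

/-- For 2×2 positive semidefinite (real symmetric) matrices `A`, `B`, the Uhlmann fidelity
satisfies `Tr √(√A B √A) = √(Tr(AB) + 2 √(det A · det B))`. -/
theorem uhlmann_fidelity_two_by_two (A B : Matrix (Fin 2) (Fin 2) ℝ)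
    (hA : A.PosSemidef) (hB : B.PosSemidef) :
    (psdSqrt (psdSqrt A * B * psdSqrt A)).trace =
      Real.sqrt ((A * B).trace + 2 * Real.sqrt (A.det * B.det)) := by
  rw [psdSqrt_eq hA]
  have hM : (hA.sqrt * B * hA.sqrt).PosSemidef := by
    have := hB.mul_mul_conjTranspose_same hA.sqrt
    rwa [hA.posSemidef_sqrt.1.eq] at this
  rw [psdSqrt_eq hM]
  set S := hM.sqrt with hS
  have hSpsd := hM.posSemidef_sqrt
  have hSS : S * S = hA.sqrt * B * hA.sqrt := hM.sqrt_mul_self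
  have htr : (hA.sqrt * B * hA.sqrt).trace = (A * B).trace := by
    rw [Matrix.trace_mul_comm, ← Matrix.mul_assoc, hA.sqrt_mul_self]
  have hdet : (hA.sqrt * B * hA.sqrt).det = A.det * B.det := by
    have h2 : hA.sqrt.det * hA.sqrt.det = A.det := by
      rw [← Matrix.det_mul, hA.sqrt_mul_self]
    rw [Matrix.det_mul, Matrix.det_mul]
    linear_combination B.det * h2
  have hdetS : S.det = Real.sqrt (A.det * B.det) := by
    have h1 : S.det ^ 2 = A.det * B.det := by
      rw [sq, ← Matrix.det_mul, hSS, hdet]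
    rw [← h1, Real.sqrt_sq (psd_det_nonneg hSpsd)]
  have key : (A * B).trace + 2 * Real.sqrt (A.det * B.det) = S.trace ^ 2 := by
    rw [trace_sq_fin_two, hSS, htr, hdetS]
  rw [key, Real.sqrt_sq (psd_trace_nonneg hSpsd)]
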